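/- arXiv:1503.00306 — 4 statements merged into one kernel-verified Lean document; each statement's English description precedes it below -/
import Mathlib

section
/- Let S be a finite index set of methods partitioned into disjoint sets In and Out, and let α ∈ (0,1). For each i ∈ S let p_i ∈ (0,1] and r_i ∈ [0,1] satisfy r_i > 0 for i ∈ In and r_i < 1 for i ∈ Out, and define q_i := α·r_i·(1−p_i)/(p_i·(1−α)). Define R := (∏_{i∈In} r_i)·(∏_{i∈Out} (1−r_i)), Q := (∏_{i∈In} q_i)·(∏_{i∈Out} (1−q_i)), and the Bayesian posterior P := R·α/(R·α + Q·(1−α)). Then P = 1/(1+K), where K = ((1−α)/α)·(∏_{i∈In} α·(1−p_i)/(p_i·(1−α)))·(∏_{i∈Out} (p_i·(1−α) − α·r_i·(1−p_i))/(p_i·(1−α)·(1−r_i))). -/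
open Finset

theorem stmt0 {ι : Type*} [DecidableEq ι] (In Out : Finset ι) (hdisj : Disjoint In Out)
    (α : ℝ) (hα : α ∈ Set.Ioo (0:ℝ) 1)
    (p r : ι → ℝ)
    (hp : ∀ i ∈ In ∪ Out, p i ∈ Set.Ioc (0:ℝ) 1)
    (hr : ∀ i ∈ In ∪ Out, r i ∈ Set.Icc (0:ℝ) 1)
    (hrIn : ∀ i ∈ In, 0 < r i)
    (hrOut : ∀ i ∈ Out, r i < 1)
    (q : ι → ℝ)
    (hq : ∀ i ∈ In ∪ Out, q i = α * r i * (1 - p i) / (p i * (1 - α)))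
    (R Q P K : ℝ)
    (hR : R = (∏ i ∈ In, r i) * ∏ i ∈ Out, (1 - r i))
    (hQ : Q = (∏ i ∈ In, q i) * ∏ i ∈ Out, (1 - q i))
    (hP : P = R * α / (R * α + Q * (1 - α)))
    (hK : K = ((1 - α) / α) * (∏ i ∈ In, α * (1 - p i) / (p i * (1 - α))) *
      ∏ i ∈ Out, (p i * (1 - α) - α * r i * (1 - p i)) / (p i * (1 - α) * (1 - r i))) :
    P = 1 / (1 + K) := by
  obtain ⟨hα0, hα1⟩ := hα
  have h1α : (0:ℝ) < 1 - α := by linarith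
  have hInpos : 0 < ∏ i ∈ In, r i := Finset.prod_pos fun i hi => hrIn i hi
  have hOutpos : 0 < ∏ i ∈ Out, (1 - r i) :=
    Finset.prod_pos fun i hi => by linarith [hrOut i hi]
  have hRpos : 0 < R := by rw [hR]; exact mul_pos hInpos hOutpos
  have hqIn : ∏ i ∈ In, q i = (∏ i ∈ In, r i) * ∏ i ∈ In, α * (1 - p i) / (p i * (1 - α)) := by
    rw [← Finset.prod_mul_distrib]
    refine Finset.prod_congr rfl fun i hi => ?_
    rw [hq i (Finset.mem_union_left _ hi)]
    ring
  have hqOut : ∏ i ∈ Out, (p i * (1 - α) - α * r i * (1 - p i)) / (p i * (1 - α) * (1 - r i))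
      = (∏ i ∈ Out, (1 - q i)) / ∏ i ∈ Out, (1 - r i) := by
    rw [← Finset.prod_div_distrib]
    refine Finset.prod_congr rfl fun i hi => ?_
    have hpi := (hp i (Finset.mem_union_right _ hi)).1
    have hri := hrOut i hi
    have hd : p i * (1 - α) ≠ 0 := by positivity
    rw [hq i (Finset.mem_union_right _ hi)]
    field_simp
  have hK' : K = Q * (1 - α) / (R * α) := by
    have hIn' : ∏ i ∈ In, α * (1 - p i) / (p i * (1 - α))
        = (∏ i ∈ In, q i) / ∏ i ∈ In, r i := by
      rw [hqIn, mul_div_cancel_left₀ _ hInpos.ne']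
    rw [hK, hIn', hqOut, hQ, hR]
    field_simp
  have hD : 1 + K = (R * α + Q * (1 - α)) / (R * α) := by
    rw [hK', add_div, div_self (by positivity : R * α ≠ 0)]
  rw [hP, hD, one_div_div]
end

section
/- Let S be a finite set of N methods. For each i ∈ S let q_i, r_i ∈ (0,1) and let c_i ∈ [0,1] be the method's confidence for a tuple t. Let γ := max over i ∈ S of { q_i/r_i, (1−q_i)/(1−r_i), r_i/q_i, (1−r_i)/(1−q_i) } (so γ ≥ 1). For each subset T ⊆ S define the weight w(T) := (∏_{i∈T} c_i)·(∏_{i∈S∖T} (1−c_i)) and the deterministic probability P(T) := 1/(1 + (∏_{i∈T} q_i/r_i)·(∏_{i∈S∖T} (1−q_i)/(1−r_i))). Define the exact probability Ex := Σ_{T⊆S} w(T)·P(T) and the approximate probability Ap := 1/(1 + ∏_{i∈S} (q_i/r_i)^{c_i}·((1−q_i)/(1−r_i))^{1−c_i}). Then both Ex and Ap lie in the interval [1/(1+γ^N), 1/(1+γ^{−N})]; consequently Ratio := max{Ex/Ap, Ap/Ex} ≤ γ^N and Abs := |Ex − Ap| ≤ (γ^N − 1)/(γ^N + 1). -/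
open Finset

private lemma icc_one_div {g x : ℝ} (hg : 0 < g) (h1 : g⁻¹ ≤ x) (h2 : x ≤ g) :
    1 / (1 + g) ≤ 1 / (1 + x) ∧ 1 / (1 + x) ≤ 1 / (1 + g⁻¹) := by
  have hgi : 0 < g⁻¹ := inv_pos.mpr hg
  have hx : 0 < x := lt_of_lt_of_le hgi h1
  exact ⟨one_div_le_one_div_of_le (by linarith) (by linarith),
    one_div_le_one_div_of_le (by linarith) (by linarith)⟩

private lemma prod_icc {ι : Type*} (S : Finset ι) (f : ι → ℝ) (γ : ℝ) (hγ : 0 < γ)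
    (h : ∀ i ∈ S, γ⁻¹ ≤ f i ∧ f i ≤ γ) :
    (γ ^ S.card)⁻¹ ≤ ∏ i ∈ S, f i ∧ ∏ i ∈ S, f i ≤ γ ^ S.card := by
  have hgi : 0 < γ⁻¹ := inv_pos.mpr hγ
  constructor
  · rw [← inv_pow, ← Finset.prod_const]
    exact Finset.prod_le_prod (fun i _ => le_of_lt hgi) (fun i hi => (h i hi).1)
  · rw [← Finset.prod_const (b := γ)]
    exact Finset.prod_le_prod (fun i hi => le_trans (le_of_lt hgi) (h i hi).1)
      (fun i hi => (h i hi).2)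

theorem stmt7 {ι : Type*} [DecidableEq ι] (S : Finset ι) (hS : S.Nonempty)
    (q r c : ι → ℝ)
    (hq : ∀ i ∈ S, q i ∈ Set.Ioo (0:ℝ) 1)
    (hr : ∀ i ∈ S, r i ∈ Set.Ioo (0:ℝ) 1)
    (hc : ∀ i ∈ S, c i ∈ Set.Icc (0:ℝ) 1)
    (γ : ℝ)
    (hγ : γ = S.sup' hS (fun i =>
      max (max (q i / r i) ((1 - q i) / (1 - r i)))
          (max (r i / q i) ((1 - r i) / (1 - q i)))))
    (w P : Finset ι → ℝ)
    (hw : ∀ T ∈ S.powerset, w T = (∏ i ∈ T, c i) * ∏ i ∈ S \ T, (1 - c i))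
    (hP : ∀ T ∈ S.powerset, P T =
      1 / (1 + (∏ i ∈ T, q i / r i) * ∏ i ∈ S \ T, (1 - q i) / (1 - r i)))
    (Ex Ap : ℝ)
    (hEx : Ex = ∑ T ∈ S.powerset, w T * P T)
    (hAp : Ap = 1 / (1 + ∏ i ∈ S, (q i / r i) ^ (c i) * ((1 - q i) / (1 - r i)) ^ (1 - c i))) :
    Ex ∈ Set.Icc (1 / (1 + γ ^ S.card)) (1 / (1 + (γ ^ S.card)⁻¹)) ∧
    Ap ∈ Set.Icc (1 / (1 + γ ^ S.card)) (1 / (1 + (γ ^ S.card)⁻¹)) ∧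
    max (Ex / Ap) (Ap / Ex) ≤ γ ^ S.card ∧
    |Ex - Ap| ≤ (γ ^ S.card - 1) / (γ ^ S.card + 1) := by
  have hγi : ∀ i ∈ S, max (max (q i / r i) ((1 - q i) / (1 - r i)))
      (max (r i / q i) ((1 - r i) / (1 - q i))) ≤ γ := by
    intro i hi
    rw [hγ]
    exact Finset.le_sup' (fun i =>
      max (max (q i / r i) ((1 - q i) / (1 - r i)))
          (max (r i / q i) ((1 - r i) / (1 - q i)))) hi
  -- the four upper bounds
  have h1 : ∀ i ∈ S, q i / r i ≤ γ := fun i hi =>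
    le_trans (le_trans (le_max_left _ _) (le_max_left _ _)) (hγi i hi)
  have h2 : ∀ i ∈ S, (1 - q i) / (1 - r i) ≤ γ := fun i hi =>
    le_trans (le_trans (le_max_right _ _) (le_max_left _ _)) (hγi i hi)
  have h3 : ∀ i ∈ S, r i / q i ≤ γ := fun i hi =>
    le_trans (le_trans (le_max_left _ _) (le_max_right _ _)) (hγi i hi)
  have h4 : ∀ i ∈ S, (1 - r i) / (1 - q i) ≤ γ := fun i hi =>
    le_trans (le_trans (le_max_right _ _) (le_max_right _ _)) (hγi i hi)
  obtain ⟨i0, hi0⟩ := hS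
  have hq0 := hq i0 hi0
  have hr0 := hr i0 hi0
  have hγpos : 0 < γ :=
    lt_of_lt_of_le (div_pos hq0.1 hr0.1) (h1 i0 hi0)
  have hγ1 : 1 ≤ γ := by
    have hqne : q i0 ≠ 0 := ne_of_gt hq0.1
    have hrne : r i0 ≠ 0 := ne_of_gt hr0.1
    have e1 : q i0 / r i0 * (r i0 / q i0) = 1 := by
      field_simp
    have p1 : 0 < q i0 / r i0 := div_pos hq0.1 hr0.1
    nlinarith [h1 i0 hi0, h3 i0 hi0]
  -- per-method interval bounds
  have key1 : ∀ i ∈ S, γ⁻¹ ≤ q i / r i ∧ q i / r i ≤ γ := by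
    intro i hi
    refine ⟨?_, h1 i hi⟩
    have hpos : 0 < r i / q i := div_pos (hr i hi).1 (hq i hi).1
    have := inv_anti₀ hpos (h3 i hi)
    rwa [inv_div] at this
  have key2 : ∀ i ∈ S, γ⁻¹ ≤ (1 - q i) / (1 - r i) ∧ (1 - q i) / (1 - r i) ≤ γ := by
    intro i hi
    refine ⟨?_, h2 i hi⟩
    have hpos : 0 < (1 - r i) / (1 - q i) :=
      div_pos (by linarith [(hr i hi).2]) (by linarith [(hq i hi).2])
    have := inv_anti₀ hpos (h4 i hi)
    rwa [inv_div] at this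
  set g : ℝ := γ ^ S.card with hg
  have hgpos : 0 < g := pow_pos hγpos _
  have hg1 : 1 ≤ g := one_le_pow₀ hγ1
  -- bounds on P
  have hPb : ∀ T ∈ S.powerset, 1 / (1 + g) ≤ P T ∧ P T ≤ 1 / (1 + g⁻¹) := by
    intro T hT
    have hTs : T ⊆ S := Finset.mem_powerset.mp hT
    set h : ι → ℝ := fun i => if i ∈ T then q i / r i else (1 - q i) / (1 - r i) with hh
    have hprod : (∏ i ∈ T, q i / r i) * ∏ i ∈ S \ T, (1 - q i) / (1 - r i)
        = ∏ i ∈ S, h i := by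
      rw [← Finset.prod_sdiff hTs (f := h), mul_comm]
      congr 1
      · exact Finset.prod_congr rfl fun i hi => by
          simp [hh, (Finset.mem_sdiff.mp hi).2]
      · exact Finset.prod_congr rfl fun i hi => by simp [hh, hi]
    have hb := prod_icc S h γ hγpos (fun i hi => by
      by_cases hiT : i ∈ T <;> simp only [hh, hiT, if_true, if_false]
      · exact key1 i hi
      · exact key2 i hi)
    rw [hP T hT, hprod]
    exact icc_one_div hgpos hb.1 hb.2
  -- weights
  have hwnn : ∀ T ∈ S.powerset, 0 ≤ w T := by
    intro T hT
    have hTs : T ⊆ S := Finset.mem_powerset.mp hT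
    rw [hw T hT]
    apply mul_nonneg
    · exact Finset.prod_nonneg fun i hi => (hc i (hTs hi)).1
    · exact Finset.prod_nonneg fun i hi =>
        by linarith [(hc i (Finset.mem_sdiff.mp hi).1).2]
  have hwsum : ∑ T ∈ S.powerset, w T = 1 := by
    rw [Finset.sum_congr rfl hw, ← Finset.prod_add]
    simp
  -- Ex bounds
  have hExl : 1 / (1 + g) ≤ Ex := by
    rw [hEx]
    calc 1 / (1 + g) = ∑ T ∈ S.powerset, w T * (1 / (1 + g)) := by
          rw [← Finset.sum_mul, hwsum, one_mul]
      _ ≤ ∑ T ∈ S.powerset, w T * P T :=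
          Finset.sum_le_sum fun T hT =>
            mul_le_mul_of_nonneg_left (hPb T hT).1 (hwnn T hT)
  have hExu : Ex ≤ 1 / (1 + g⁻¹) := by
    rw [hEx]
    calc ∑ T ∈ S.powerset, w T * P T
        ≤ ∑ T ∈ S.powerset, w T * (1 / (1 + g⁻¹)) :=
          Finset.sum_le_sum fun T hT =>
            mul_le_mul_of_nonneg_left (hPb T hT).2 (hwnn T hT)
      _ = 1 / (1 + g⁻¹) := by rw [← Finset.sum_mul, hwsum, one_mul]
  -- Ap bounds
  have hApb : 1 / (1 + g) ≤ Ap ∧ Ap ≤ 1 / (1 + g⁻¹) := by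
    have hb := prod_icc S
      (fun i => (q i / r i) ^ (c i) * ((1 - q i) / (1 - r i)) ^ (1 - c i)) γ hγpos ?_
    · rw [hAp]
      exact icc_one_div hgpos hb.1 hb.2
    · intro i hi
      have hc0 := (hc i hi).1
      have hc1 := (hc i hi).2
      have hx := key1 i hi
      have hy := key2 i hi
      have hγinn : (0:ℝ) ≤ γ⁻¹ := le_of_lt (inv_pos.mpr hγpos)
      have hxpos : (0:ℝ) < q i / r i := div_pos (hq i hi).1 (hr i hi).1
      have hypos : (0:ℝ) < (1 - q i) / (1 - r i) :=
        div_pos (by linarith [(hq i hi).2]) (by linarith [(hr i hi).2])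
      constructor
      · calc γ⁻¹ = γ⁻¹ ^ (c i + (1 - c i)) := by
              rw [show c i + (1 - c i) = 1 by ring, Real.rpow_one]
          _ = γ⁻¹ ^ (c i) * γ⁻¹ ^ (1 - c i) := Real.rpow_add (inv_pos.mpr hγpos) _ _
          _ ≤ (q i / r i) ^ (c i) * ((1 - q i) / (1 - r i)) ^ (1 - c i) := by
              apply mul_le_mul
              · exact Real.rpow_le_rpow hγinn hx.1 hc0
              · exact Real.rpow_le_rpow hγinn hy.1 (by linarith)
              · exact Real.rpow_nonneg hγinn _
              · exact le_of_lt (Real.rpow_pos_of_pos hxpos _)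
      · calc (q i / r i) ^ (c i) * ((1 - q i) / (1 - r i)) ^ (1 - c i)
            ≤ γ ^ (c i) * γ ^ (1 - c i) := by
              apply mul_le_mul
              · exact Real.rpow_le_rpow (le_of_lt hxpos) hx.2 hc0
              · exact Real.rpow_le_rpow (le_of_lt hypos) hy.2 (by linarith)
              · exact le_of_lt (Real.rpow_pos_of_pos hypos _)
              · exact le_of_lt (Real.rpow_pos_of_pos hγpos _)
          _ = γ := by
              rw [← Real.rpow_add hγpos, show c i + (1 - c i) = 1 by ring,
                Real.rpow_one]
  -- conclusions
  have hLpos : (0:ℝ) < 1 / (1 + g) := by positivity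
  have hUeq : 1 / (1 + g⁻¹) = g * (1 / (1 + g)) := by
    field_simp
    ring
  have hULeq : 1 / (1 + g⁻¹) - 1 / (1 + g) = (g - 1) / (g + 1) := by
    rw [div_sub_div _ _ (by positivity) (by positivity : (1:ℝ) + g ≠ 0)]
    rw [div_eq_div_iff (by positivity) (by positivity)]
    field_simp
    ring
  have hAppos : 0 < Ap := lt_of_lt_of_le hLpos hApb.1
  have hExpos : 0 < Ex := lt_of_lt_of_le hLpos hExl
  refine ⟨⟨hExl, hExu⟩, ⟨hApb.1, hApb.2⟩, ?_, ?_⟩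
  · apply max_le
    · rw [div_le_iff₀ hAppos]
      calc Ex ≤ 1 / (1 + g⁻¹) := hExu
        _ = g * (1 / (1 + g)) := hUeq
        _ ≤ g * Ap := mul_le_mul_of_nonneg_left hApb.1 (le_of_lt hgpos)
    · rw [div_le_iff₀ hExpos]
      calc Ap ≤ 1 / (1 + g⁻¹) := hApb.2
        _ = g * (1 / (1 + g)) := hUeq
        _ ≤ g * Ex := mul_le_mul_of_nonneg_left hExl (le_of_lt hgpos)
  · rw [abs_sub_le_iff]
    constructor <;> linarith [hApb.1, hApb.2, hExl, hExu, hULeq]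
end

section
/- Let S be a finite set of N methods, and let ε ∈ (0,1). For each i ∈ S let q_i, r_i ∈ (0,1) and c_i ∈ [0,1], and suppose (1−ε) ≤ q_i/r_i ≤ (1+ε) and (1−ε) ≤ (1−q_i)/(1−r_i) ≤ (1+ε) for all i. Define the weight w(T) := (∏_{i∈T} c_i)·(∏_{i∈S∖T} (1−c_i)) for each T ⊆ S, the deterministic probability P(T) := 1/(1 + (∏_{i∈T} q_i/r_i)·(∏_{i∈S∖T} (1−q_i)/(1−r_i))), the exact probability Ex := Σ_{T⊆S} w(T)·P(T), and the approximate probability Ap := 1/(1 + ∏_{i∈S} (q_i/r_i)^{c_i}·((1−q_i)/(1−r_i))^{1−c_i}). Then 1/(1+(1+ε)^N) ≤ Ex ≤ 1/(1+(1−ε)^N) and 1/(1+(1+ε)^N) ≤ Ap ≤ 1/(1+(1−ε)^N); consequently |Ex − Ap| ≤ 1/(1+(1−ε)^N) − 1/(1+(1+ε)^N) and max{Ex/Ap, Ap/Ex} ≤ (1+(1+ε)^N)/(1+(1−ε)^N). -/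
open Finset

theorem stmt8 {ι : Type*} [DecidableEq ι] (S : Finset ι) (ε : ℝ)
    (hε : ε ∈ Set.Ioo (0:ℝ) 1)
    (q r c : ι → ℝ)
    (hq : ∀ i ∈ S, q i ∈ Set.Ioo (0:ℝ) 1)
    (hr : ∀ i ∈ S, r i ∈ Set.Ioo (0:ℝ) 1)
    (hc : ∀ i ∈ S, c i ∈ Set.Icc (0:ℝ) 1)
    (hratio1 : ∀ i ∈ S, q i / r i ∈ Set.Icc (1 - ε) (1 + ε))
    (hratio2 : ∀ i ∈ S, (1 - q i) / (1 - r i) ∈ Set.Icc (1 - ε) (1 + ε))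
    (w P : Finset ι → ℝ)
    (hw : ∀ T ∈ S.powerset, w T = (∏ i ∈ T, c i) * ∏ i ∈ S \ T, (1 - c i))
    (hP : ∀ T ∈ S.powerset, P T =
      1 / (1 + (∏ i ∈ T, q i / r i) * ∏ i ∈ S \ T, (1 - q i) / (1 - r i)))
    (Ex Ap : ℝ)
    (hEx : Ex = ∑ T ∈ S.powerset, w T * P T)
    (hAp : Ap = 1 / (1 + ∏ i ∈ S, (q i / r i) ^ (c i) * ((1 - q i) / (1 - r i)) ^ (1 - c i))) :
    Ex ∈ Set.Icc (1 / (1 + (1 + ε) ^ S.card)) (1 / (1 + (1 - ε) ^ S.card)) ∧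
    Ap ∈ Set.Icc (1 / (1 + (1 + ε) ^ S.card)) (1 / (1 + (1 - ε) ^ S.card)) ∧
    |Ex - Ap| ≤ 1 / (1 + (1 - ε) ^ S.card) - 1 / (1 + (1 + ε) ^ S.card) ∧
    max (Ex / Ap) (Ap / Ex) ≤ (1 + (1 + ε) ^ S.card) / (1 + (1 - ε) ^ S.card) := by
  obtain ⟨hε0, hε1⟩ := hε
  set N := S.card with hN
  have h1e : (0:ℝ) < 1 - ε := by linarith
  have h1p : (0:ℝ) < 1 + ε := by linarith
  have hpe : (0:ℝ) < (1 - ε) ^ N := pow_pos h1e N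
  have hpp : (0:ℝ) < (1 + ε) ^ N := pow_pos h1p N
  set L := 1 / (1 + (1 + ε) ^ N) with hLdef
  set U := 1 / (1 + (1 - ε) ^ N) with hUdef
  have hLpos : 0 < L := by rw [hLdef]; positivity
  have hUpos : 0 < U := by rw [hUdef]; positivity
  have hbound : ∀ x : ℝ, (1 - ε) ^ N ≤ x → x ≤ (1 + ε) ^ N →
      L ≤ 1 / (1 + x) ∧ 1 / (1 + x) ≤ U := by
    intro x h1 h2
    have hx : 0 < 1 + x := by linarith
    constructor
    · exact one_div_le_one_div_of_le hx (by linarith)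
    · exact one_div_le_one_div_of_le (by linarith) (by linarith)
  -- bounds on P T
  have hPT : ∀ T ∈ S.powerset, L ≤ P T ∧ P T ≤ U := by
    intro T hT
    have hTS : T ⊆ S := Finset.mem_powerset.mp hT
    rw [hP T hT]
    set f : ι → ℝ := fun i => if i ∈ T then q i / r i else (1 - q i) / (1 - r i) with hf
    have hf1 : ∀ i ∈ S, 1 - ε ≤ f i ∧ f i ≤ 1 + ε := by
      intro i hi
      by_cases h : i ∈ T
      · simp only [hf, if_pos h]
        exact ⟨(hratio1 i hi).1, (hratio1 i hi).2⟩
      · simp only [hf, if_neg h]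
        exact ⟨(hratio2 i hi).1, (hratio2 i hi).2⟩
    have hsplit : (∏ i ∈ T, q i / r i) * ∏ i ∈ S \ T, (1 - q i) / (1 - r i)
        = ∏ i ∈ S, f i := by
      have h1 : (∏ i ∈ T, q i / r i) = ∏ i ∈ T, f i :=
        Finset.prod_congr rfl (fun i hi => by simp [hf, hi])
      have h2 : (∏ i ∈ S \ T, (1 - q i) / (1 - r i)) = ∏ i ∈ S \ T, f i :=
        Finset.prod_congr rfl (fun i hi => by
          simp [hf, (Finset.mem_sdiff.mp hi).2])
      rw [h1, h2, ← Finset.prod_union (Finset.disjoint_sdiff),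
        Finset.union_sdiff_of_subset hTS]
    rw [hsplit]
    have hlow : (1 - ε) ^ N ≤ ∏ i ∈ S, f i := by
      calc (1 - ε) ^ N = ∏ _i ∈ S, (1 - ε) := by rw [Finset.prod_const, hN]
        _ ≤ ∏ i ∈ S, f i :=
          Finset.prod_le_prod (fun i _ => h1e.le) (fun i hi => (hf1 i hi).1)
    have hhigh : ∏ i ∈ S, f i ≤ (1 + ε) ^ N := by
      calc ∏ i ∈ S, f i ≤ ∏ _i ∈ S, (1 + ε) :=
          Finset.prod_le_prod (fun i hi => by linarith [(hf1 i hi).1])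
            (fun i hi => (hf1 i hi).2)
        _ = (1 + ε) ^ N := by rw [Finset.prod_const, hN]
    exact hbound _ hlow hhigh
  -- weights
  have hw0 : ∀ T ∈ S.powerset, 0 ≤ w T := by
    intro T hT
    have hTS : T ⊆ S := Finset.mem_powerset.mp hT
    rw [hw T hT]
    apply mul_nonneg
    · exact Finset.prod_nonneg (fun i hi => (hc i (hTS hi)).1)
    · exact Finset.prod_nonneg (fun i hi =>
        by linarith [(hc i (Finset.mem_sdiff.mp hi).1).2])
  have hwsum : ∑ T ∈ S.powerset, w T = 1 := by
    rw [Finset.sum_congr rfl hw, ← Finset.prod_add]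
    simp
  -- Ex bounds
  have hExL : L ≤ Ex := by
    rw [hEx]
    calc L = (∑ T ∈ S.powerset, w T) * L := by rw [hwsum, one_mul]
      _ = ∑ T ∈ S.powerset, w T * L := Finset.sum_mul _ _ _
      _ ≤ ∑ T ∈ S.powerset, w T * P T :=
        Finset.sum_le_sum (fun T hT =>
          mul_le_mul_of_nonneg_left (hPT T hT).1 (hw0 T hT))
  have hExU : Ex ≤ U := by
    rw [hEx]
    calc ∑ T ∈ S.powerset, w T * P T ≤ ∑ T ∈ S.powerset, w T * U :=
        Finset.sum_le_sum (fun T hT =>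
          mul_le_mul_of_nonneg_left (hPT T hT).2 (hw0 T hT))
      _ = (∑ T ∈ S.powerset, w T) * U := (Finset.sum_mul _ _ _).symm
      _ = U := by rw [hwsum, one_mul]
  -- Ap bounds
  have hg : ∀ i ∈ S, 1 - ε ≤ (q i / r i) ^ (c i) * ((1 - q i) / (1 - r i)) ^ (1 - c i) ∧
      (q i / r i) ^ (c i) * ((1 - q i) / (1 - r i)) ^ (1 - c i) ≤ 1 + ε := by
    intro i hi
    obtain ⟨hq0, hq1⟩ := hq i hi
    obtain ⟨hr0, hr1⟩ := hr i hi
    obtain ⟨hc0, hc1⟩ := hc i hi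
    have ha0 : 0 < q i / r i := div_pos hq0 hr0
    have hb0 : 0 < (1 - q i) / (1 - r i) := div_pos (by linarith) (by linarith)
    have hc1' : 0 ≤ 1 - c i := by linarith
    constructor
    · have h1 : (1 - ε) ^ (c i) ≤ (q i / r i) ^ (c i) :=
        Real.rpow_le_rpow h1e.le (hratio1 i hi).1 hc0
      have h2 : (1 - ε) ^ (1 - c i) ≤ ((1 - q i) / (1 - r i)) ^ (1 - c i) :=
        Real.rpow_le_rpow h1e.le (hratio2 i hi).1 hc1'
      have h3 : (1 - ε) ^ (c i) * (1 - ε) ^ (1 - c i) = 1 - ε := by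
        rw [← Real.rpow_add h1e]
        norm_num
      calc 1 - ε = (1 - ε) ^ (c i) * (1 - ε) ^ (1 - c i) := h3.symm
        _ ≤ _ := mul_le_mul h1 h2 (Real.rpow_nonneg h1e.le _)
            (Real.rpow_nonneg ha0.le _)
    · have h1 : (q i / r i) ^ (c i) ≤ (1 + ε) ^ (c i) :=
        Real.rpow_le_rpow ha0.le (hratio1 i hi).2 hc0
      have h2 : ((1 - q i) / (1 - r i)) ^ (1 - c i) ≤ (1 + ε) ^ (1 - c i) :=
        Real.rpow_le_rpow hb0.le (hratio2 i hi).2 hc1'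
      have h3 : (1 + ε) ^ (c i) * (1 + ε) ^ (1 - c i) = 1 + ε := by
        rw [← Real.rpow_add h1p]
        norm_num
      calc (q i / r i) ^ (c i) * ((1 - q i) / (1 - r i)) ^ (1 - c i)
          ≤ (1 + ε) ^ (c i) * (1 + ε) ^ (1 - c i) :=
            mul_le_mul h1 h2 (Real.rpow_nonneg hb0.le _)
              (Real.rpow_nonneg h1p.le _)
        _ = 1 + ε := h3
  have hglow : (1 - ε) ^ N ≤ ∏ i ∈ S, (q i / r i) ^ (c i) * ((1 - q i) / (1 - r i)) ^ (1 - c i) := by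
    calc (1 - ε) ^ N = ∏ _i ∈ S, (1 - ε) := by rw [Finset.prod_const, hN]
      _ ≤ _ := Finset.prod_le_prod (fun i _ => h1e.le) (fun i hi => (hg i hi).1)
  have hghigh : ∏ i ∈ S, (q i / r i) ^ (c i) * ((1 - q i) / (1 - r i)) ^ (1 - c i) ≤ (1 + ε) ^ N := by
    calc ∏ i ∈ S, (q i / r i) ^ (c i) * ((1 - q i) / (1 - r i)) ^ (1 - c i)
        ≤ ∏ _i ∈ S, (1 + ε) :=
          Finset.prod_le_prod (fun i hi => by linarith [(hg i hi).1])
            (fun i hi => (hg i hi).2)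
      _ = (1 + ε) ^ N := by rw [Finset.prod_const, hN]
  have hApb := hbound _ hglow hghigh
  rw [← hAp] at hApb
  obtain ⟨hApL, hApU⟩ := hApb
  refine ⟨⟨hExL, hExU⟩, ⟨hApL, hApU⟩, ?_, ?_⟩
  · rw [abs_le]
    constructor <;> linarith
  · have hUL : U / L = (1 + (1 + ε) ^ N) / (1 + (1 - ε) ^ N) := by
      rw [hLdef, hUdef]
      field_simp
    have h1 : Ex / Ap ≤ U / L :=
      div_le_div₀ hUpos.le hExU hLpos hApL
    have h2 : Ap / Ex ≤ U / L :=
      div_le_div₀ hUpos.le hApU hLpos hExL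
    rw [hUL] at h1 h2
    exact max_le h1 h2
end

section
/- Let S be a finite set, let c : S → ℝ with 0 ≤ c_i ≤ 1 for all i, and let X, Y : S → ℝ with X_i > 0 and Y_i > 0 for all i. For each subset T ⊆ S define c(T) := (∏_{i∈T} c_i)·(∏_{i∈S∖T} (1−c_i)). Then ∏ over all subsets T ⊆ S of ( (∏_{i∈T} X_i)·(∏_{i∈S∖T} Y_i) )^{c(T)} = ∏_{i∈S} X_i^{c_i} · Y_i^{1−c_i}. -/
open Finset

theorem stmt16 {ι : Type*} [DecidableEq ι] (S : Finset ι)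
    (c X Y : ι → ℝ)
    (hc : ∀ i ∈ S, c i ∈ Set.Icc (0:ℝ) 1)
    (hX : ∀ i ∈ S, 0 < X i)
    (hY : ∀ i ∈ S, 0 < Y i) :
    ∏ T ∈ S.powerset,
        ((∏ i ∈ T, X i) * ∏ i ∈ S \ T, Y i) ^
          ((∏ i ∈ T, c i) * ∏ i ∈ S \ T, (1 - c i)) =
      ∏ i ∈ S, X i ^ (c i) * Y i ^ (1 - c i) := by
  classical
  induction S using Finset.induction_on with
  | empty => simp
  | @insert a s ha ih =>
    have hca : c a ∈ Set.Icc (0:ℝ) 1 := hc a (mem_insert_self a s)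
    have hXa : 0 < X a := hX a (mem_insert_self a s)
    have hYa : 0 < Y a := hY a (mem_insert_self a s)
    have hc' : ∀ i ∈ s, c i ∈ Set.Icc (0:ℝ) 1 := fun i hi => hc i (mem_insert_of_mem hi)
    have hX' : ∀ i ∈ s, 0 < X i := fun i hi => hX i (mem_insert_of_mem hi)
    have hY' : ∀ i ∈ s, 0 < Y i := fun i hi => hY i (mem_insert_of_mem hi)
    have hPpos : ∀ T ∈ s.powerset, 0 < ∏ i ∈ T, X i := by
      intro T hT
      exact Finset.prod_pos fun i hi => hX' i (mem_powerset.mp hT hi)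
    have hQpos : ∀ T ∈ s.powerset, 0 < ∏ i ∈ s \ T, Y i := by
      intro T _
      exact Finset.prod_pos fun i hi => hY' i (mem_sdiff.mp hi).1
    have hwsum : ∑ T ∈ s.powerset, (∏ i ∈ T, c i) * ∏ i ∈ s \ T, (1 - c i) = 1 := by
      rw [← Finset.prod_add]
      exact Finset.prod_eq_one fun i _ => by ring
    rw [Finset.powerset_insert, Finset.prod_union]
    · have hinj : ∀ T ∈ s.powerset, ∀ U ∈ s.powerset,
          insert a T = insert a U → T = U := by
        intro T hT U hU h
        have haT : a ∉ T := fun h' => ha (mem_powerset.mp hT h')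
        have haU : a ∉ U := fun h' => ha (mem_powerset.mp hU h')
        rw [← Finset.erase_insert haT, ← Finset.erase_insert haU, h]
      rw [Finset.prod_image hinj]
      have key1 : ∀ T ∈ s.powerset,
          ((∏ i ∈ T, X i) * ∏ i ∈ insert a s \ T, Y i) ^
            ((∏ i ∈ T, c i) * ∏ i ∈ insert a s \ T, (1 - c i)) =
          (((∏ i ∈ T, X i) * ∏ i ∈ s \ T, Y i) ^
            ((∏ i ∈ T, c i) * ∏ i ∈ s \ T, (1 - c i))) ^ (1 - c a) *
          Y a ^ ((1 - c a) * ((∏ i ∈ T, c i) * ∏ i ∈ s \ T, (1 - c i))) := by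
        intro T hT
        have haT : a ∉ T := fun h => ha (mem_powerset.mp hT h)
        have h1 : insert a s \ T = insert a (s \ T) := by
          rw [Finset.insert_sdiff_of_notMem _ haT]
        have haS : a ∉ s \ T := fun h => ha (mem_sdiff.mp h).1
        have hPQ := (mul_pos (hPpos T hT) (hQpos T hT)).le
        rw [h1, Finset.prod_insert haS, Finset.prod_insert haS,
            show (∏ i ∈ T, X i) * (Y a * ∏ i ∈ s \ T, Y i)
              = ((∏ i ∈ T, X i) * ∏ i ∈ s \ T, Y i) * Y a from by ring,
            show (∏ i ∈ T, c i) * ((1 - c a) * ∏ i ∈ s \ T, (1 - c i))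
              = ((∏ i ∈ T, c i) * ∏ i ∈ s \ T, (1 - c i)) * (1 - c a) from by ring,
            Real.mul_rpow hPQ hYa.le, ← Real.rpow_mul hPQ,
            mul_comm ((∏ i ∈ T, c i) * ∏ i ∈ s \ T, (1 - c i)) (1 - c a)]
      have key2 : ∀ T ∈ s.powerset,
          ((∏ i ∈ insert a T, X i) * ∏ i ∈ insert a s \ insert a T, Y i) ^
            ((∏ i ∈ insert a T, c i) * ∏ i ∈ insert a s \ insert a T, (1 - c i)) =
          (((∏ i ∈ T, X i) * ∏ i ∈ s \ T, Y i) ^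
            ((∏ i ∈ T, c i) * ∏ i ∈ s \ T, (1 - c i))) ^ (c a) *
          X a ^ (c a * ((∏ i ∈ T, c i) * ∏ i ∈ s \ T, (1 - c i))) := by
        intro T hT
        have haT : a ∉ T := fun h => ha (mem_powerset.mp hT h)
        have h1 : insert a s \ insert a T = s \ T := by
          ext x
          simp only [mem_sdiff, mem_insert, not_or]
          constructor
          · rintro ⟨(rfl | hxs), hna, hnT⟩
            · exact absurd rfl hna
            · exact ⟨hxs, hnT⟩
          · rintro ⟨hxs, hnT⟩
            exact ⟨Or.inr hxs, fun h => ha (h ▸ hxs), hnT⟩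
        have hPQ := (mul_pos (hPpos T hT) (hQpos T hT)).le
        rw [h1, Finset.prod_insert haT, Finset.prod_insert haT,
            show (X a * ∏ i ∈ T, X i) * ∏ i ∈ s \ T, Y i
              = ((∏ i ∈ T, X i) * ∏ i ∈ s \ T, Y i) * X a from by ring,
            show (c a * ∏ i ∈ T, c i) * ∏ i ∈ s \ T, (1 - c i)
              = ((∏ i ∈ T, c i) * ∏ i ∈ s \ T, (1 - c i)) * c a from by ring,
            Real.mul_rpow hPQ hXa.le, ← Real.rpow_mul hPQ,
            mul_comm ((∏ i ∈ T, c i) * ∏ i ∈ s \ T, (1 - c i)) (c a)]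
      rw [Finset.prod_congr rfl key1, Finset.prod_congr rfl key2]
      rw [Finset.prod_mul_distrib, Finset.prod_mul_distrib]
      rw [← Real.rpow_sum_of_pos hYa, ← Real.rpow_sum_of_pos hXa,
          ← Finset.mul_sum, ← Finset.mul_sum, hwsum, mul_one, mul_one]
      have hnn : ∀ T ∈ s.powerset,
          0 ≤ ((∏ i ∈ T, X i) * ∏ i ∈ s \ T, Y i) ^
            ((∏ i ∈ T, c i) * ∏ i ∈ s \ T, (1 - c i)) := fun T hT =>
        Real.rpow_nonneg (mul_pos (hPpos T hT) (hQpos T hT)).le _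
      rw [Real.finset_prod_rpow _ _ hnn (1 - c a), Real.finset_prod_rpow _ _ hnn (c a)]
      rw [ih hc' hX' hY', Finset.prod_insert ha]
      have hprodpos : 0 < ∏ i ∈ s, X i ^ c i * Y i ^ (1 - c i) :=
        Finset.prod_pos fun i hi => mul_pos
          (Real.rpow_pos_of_pos (hX' i hi) _) (Real.rpow_pos_of_pos (hY' i hi) _)
      have hR : (∏ i ∈ s, X i ^ c i * Y i ^ (1 - c i)) ^ (1 - c a)
          * (∏ i ∈ s, X i ^ c i * Y i ^ (1 - c i)) ^ (c a)
          = ∏ i ∈ s, X i ^ c i * Y i ^ (1 - c i) := by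
        rw [← Real.rpow_add hprodpos]
        norm_num
      conv_rhs => rw [← hR]
      ring
    · rw [Finset.disjoint_left]
      intro T hT hT'
      obtain ⟨U, hU, rfl⟩ := Finset.mem_image.mp hT'
      exact ha (mem_powerset.mp hT (mem_insert_self a U))
end
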